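/- If u, v ∈ H satisfy u² = u, v² = v and uvu = vuv, then for all x, y ∈ A: h_u(x)·h_v(xy)·h_u(y) = h_v(y)·h_u(xy)·h_v(x). -/
import Mathlib


/-- `h_u(x) = 1 + (x - 1)·u` in an associative unital `A`-algebra `H`. -/
def heckeFactor {A H : Type*} [CommRing A] [Ring H] [Algebra A H] (u : H) (x : A) : H :=
  1 + (x - 1) • u

/-- Yang–Baxter type relation for a pair of idempotents satisfying the braid relation
of order `3` (i.e. `uvu = vuv`): for all `x y : A`,
`h_u(x)·h_v(xy)·h_u(y) = h_v(y)·h_u(xy)·h_v(x)`. -/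
theorem yangBaxter_order_three {A H : Type*} [CommRing A] [Ring H] [Algebra A H]
    (u v : H) (hu : u ^ 2 = u) (hv : v ^ 2 = v) (hbraid : u * v * u = v * u * v)
    (x y : A) :
    heckeFactor u x * heckeFactor v (x * y) * heckeFactor u y
      = heckeFactor v y * heckeFactor u (x * y) * heckeFactor v x := by
  have hu' : u * u = u := by rw [← sq]; exact hu
  have hv' : v * v = v := by rw [← sq]; exact hv
  simp only [heckeFactor, mul_add, add_mul, one_mul, mul_one, smul_mul_assoc,
    mul_smul_comm, smul_smul, hu', hv', mul_assoc, hbraid]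
  module
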